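/- If $D$ is an integral domain and $G$ is a finite group acting on $D$ by ring automorphisms, then the field of fractions of the fixed ring $D^G$ is isomorphic to the fixed field $(\mathrm{Frac}\,D)^G$ of the induced $G$-action on the field of fractions of $D$. -/

import Mathlib

/-- The subring of a ring `R` fixed pointwise by a multiplicative action of `G`. -/
def fixedSubring (G : Type*) (R : Type*) [Monoid G] [Ring R] [MulSemiringAction G R] :
    Subring R where
  carrier := {x : R | ∀ g : G, g • x = x}
  one_mem' := fun g => smul_one g
  mul_mem' := fun {a b} ha hb g => by rw [smul_mul', ha g, hb g]
  add_mem' := fun {a b} ha hb g => by rw [smul_add, ha g, hb g]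
  zero_mem' := fun g => smul_zero g
  neg_mem' := fun {a} ha g => by rw [smul_neg, ha g]

/-- If `D` is an integral domain and `G` a finite group acting on `D` by ring automorphisms,
then the field of fractions of the fixed ring `D^G` is isomorphic to the fixed field
`(Frac D)^G` of the induced action on any fraction field `L` of `D`. -/
theorem fractionRing_of_fixedSubring (D : Type*) [CommRing D] [IsDomain D]
    (G : Type*) [Group G] [Finite G] [MulSemiringAction G D]
    (L : Type*) [Field L] [Algebra D L] [IsFractionRing D L] [MulSemiringAction G L]
    (hcompat : ∀ (g : G) (d : D), g • (algebraMap D L d) = algebraMap D L (g • d)) :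
    Nonempty (FractionRing ↥(fixedSubring G D) ≃+* ↥(FixedPoints.subfield G L)) := by
  have := Fintype.ofFinite G
  set A := fixedSubring G D
  set K := FixedPoints.subfield G L
  have hinj : Function.Injective (algebraMap D L) := IsFractionRing.injective D L
  -- the ring hom A →+* K
  let f : A →+* K := {
    toFun := fun a => ⟨algebraMap D L a.1, fun g => by rw [hcompat, a.2 g]⟩
    map_one' := by ext; simp
    map_mul' := fun a b => by ext; simp
    map_zero' := by ext; simp
    map_add' := fun a b => by ext; simp }
  have finj : Function.Injective f := by
    intro a b h
    exact Subtype.ext (hinj (congrArg Subtype.val h))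
  letI : Algebra A K := f.toAlgebra
  have hfix : ∀ b : D, ∀ g : G, g • (∏ h : G, h • b) = ∏ h : G, h • b := by
    intro b g
    calc g • (∏ h : G, h • b)
        = (MulSemiringAction.toRingHom G D g) (∏ h : G, h • b) := rfl
      _ = ∏ h : G, (MulSemiringAction.toRingHom G D g) (h • b) := map_prod _ _ _
      _ = ∏ h : G, (g * h) • b := by
            refine Finset.prod_congr rfl fun h _ => ?_
            show g • (h • b) = (g * h) • b
            rw [smul_smul]
      _ = ∏ h : G, h • b := Fintype.prod_equiv (Equiv.mulLeft g) _ _ fun h => rfl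
  classical
  haveI : IsFractionRing A K := by
    constructor
    constructor
    · rintro ⟨b, hb⟩
      have hb0 : (b : A) ≠ 0 := nonZeroDivisors.ne_zero hb
      have : (f b : L) ≠ 0 := by
        simp only [f, RingHom.coe_mk, MonoidHom.coe_mk, OneHom.coe_mk]
        exact fun h => hb0 (Subtype.ext (hinj (by simpa using h)))
      exact isUnit_iff_ne_zero.mpr (fun h => this (congrArg Subtype.val h))
    · intro z
      obtain ⟨⟨a₀, b⟩, hz⟩ := IsLocalization.surj (nonZeroDivisors D) (z : L)
      have hb0 : (b : D) ≠ 0 := nonZeroDivisors.ne_zero b.2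
      -- N = product of all g • b
      set N : D := ∏ h : G, h • (b : D) with hN
      have hNfix : ∀ g : G, g • N = N := hfix b
      have hN0 : N ≠ 0 := by
        rw [hN]
        exact Finset.prod_ne_zero_iff.mpr fun g _ h => hb0 (by
          have := congrArg (g⁻¹ • ·) h
          set_option linter.unnecessarySimpa false in simpa using this)
      set M : D := ∏ h ∈ Finset.univ.erase (1 : G), h • (b : D) with hM
      have hNM : N = (b : D) * M := by
        rw [hN, hM, ← Finset.mul_prod_erase Finset.univ _ (Finset.mem_univ (1 : G)),
          one_smul]
      have key : (z : L) * algebraMap D L N = algebraMap D L (a₀ * M) := by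
        rw [hNM, map_mul, map_mul, ← mul_assoc, hz]
      have hnumfix : ∀ g : G, g • (a₀ * M) = a₀ * M := by
        intro g
        apply hinj
        rw [← hcompat, ← key, smul_mul', z.2 g, hcompat, hNfix, key]
      refine ⟨⟨⟨a₀ * M, hnumfix⟩, ⟨⟨N, hNfix⟩, ?_⟩⟩, ?_⟩
      · exact mem_nonZeroDivisors_of_ne_zero (fun h => hN0 (congrArg Subtype.val h))
      · exact Subtype.ext key
    · intro a b h
      exact ⟨1, by simpa using finj h⟩
  exact ⟨(FractionRing.algEquiv A K).toRingEquiv⟩
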